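/- Theorem 1 (CV formula): Under the hypotheses of Lemma 2, and assuming additionally that I - H_k is invertible for each k, the cross-validation criterion CV = ∑_{k=1}^N (y_k - f⁻ᵏ)ᵀ W_k (y_k - f⁻ᵏ) equals ∑_{k=1}^N [(I - H_k)⁻¹(f̂ - y_k)]ᵀ W_k [(I - H_k)⁻¹(f̂ - y_k)]. -/

import Mathlib

open Matrix Finset

theorem stmt_3 {n N : ℕ}
    (W : Fin N → Matrix (Fin n) (Fin n) ℝ) (hW : ∀ r, (W r).PosDef)
    (P : (Fin n → ℝ) → ℝ) (y : Fin N → Fin n → ℝ)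
    (H : Fin N → Matrix (Fin n) (Fin n) ℝ)
    (hHinv : ∀ k, IsUnit (1 - H k))
    -- representation hypothesis: for any data u₁,…,u_N, any maximizer of the
    -- full objective equals ∑ r, H_r u_r
    (hrep : ∀ (u : Fin N → Fin n → ℝ) (f : Fin n → ℝ),
      (∀ g : Fin n → ℝ,
        -(1/2) * ∑ r, (u r - g) ⬝ᵥ ((W r) *ᵥ (u r - g)) + P g ≤
        -(1/2) * ∑ r, (u r - f) ⬝ᵥ ((W r) *ᵥ (u r - f)) + P f) →
      f = ∑ r, (H r) *ᵥ (u r))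
    (fm : Fin N → Fin n → ℝ) (fhat : Fin n → ℝ)
    -- for each k, fm k maximizes the leave-one-out objective
    (hfm : ∀ (k : Fin N) (g : Fin n → ℝ),
      -(1/2) * ∑ r ∈ univ.erase k, (y r - g) ⬝ᵥ ((W r) *ᵥ (y r - g)) + P g ≤
      -(1/2) * ∑ r ∈ univ.erase k, (y r - fm k) ⬝ᵥ ((W r) *ᵥ (y r - fm k)) + P (fm k))
    -- fhat maximizes the full objective
    (hfhat : ∀ g : Fin n → ℝ,
      -(1/2) * ∑ r, (y r - g) ⬝ᵥ ((W r) *ᵥ (y r - g)) + P g ≤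
      -(1/2) * ∑ r, (y r - fhat) ⬝ᵥ ((W r) *ᵥ (y r - fhat)) + P fhat) :
    ∑ k, (y k - fm k) ⬝ᵥ ((W k) *ᵥ (y k - fm k)) =
    ∑ k, ((1 - H k)⁻¹ *ᵥ (fhat - y k)) ⬝ᵥ ((W k) *ᵥ ((1 - H k)⁻¹ *ᵥ (fhat - y k))) := by

  have hfhat_eq : fhat = ∑ r, (H r) *ᵥ (y r) := hrep y fhat hfhat
  refine Finset.sum_congr rfl fun k _ => ?_
  -- modified data
  set u : Fin N → Fin n → ℝ := Function.update y k (fm k) with hu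
  have hu_k : u k = fm k := Function.update_self k (fm k) y
  have hu_ne : ∀ r, r ≠ k → u r = y r := fun r hr => Function.update_of_ne hr _ _
  have herase : ∀ g : Fin n → ℝ, ∑ r ∈ univ.erase k, (u r - g) ⬝ᵥ ((W r) *ᵥ (u r - g))
      = ∑ r ∈ univ.erase k, (y r - g) ⬝ᵥ ((W r) *ᵥ (y r - g)) := by
    intro g
    refine Finset.sum_congr rfl fun r hr => ?_
    rw [hu_ne r (Finset.mem_erase.mp hr).1]
  have hmax : ∀ g : Fin n → ℝ,
      -(1/2) * ∑ r, (u r - g) ⬝ᵥ ((W r) *ᵥ (u r - g)) + P g ≤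
      -(1/2) * ∑ r, (u r - fm k) ⬝ᵥ ((W r) *ᵥ (u r - fm k)) + P (fm k) := by
    intro g
    have hsplit : ∀ g : Fin n → ℝ, ∑ r, (u r - g) ⬝ᵥ ((W r) *ᵥ (u r - g))
        = (∑ r ∈ univ.erase k, (y r - g) ⬝ᵥ ((W r) *ᵥ (y r - g)))
          + (u k - g) ⬝ᵥ ((W k) *ᵥ (u k - g)) := by
      intro g
      rw [← herase g]
      exact (Finset.sum_erase_add _ _ (Finset.mem_univ k)).symm
    have hq0 : 0 ≤ (u k - g) ⬝ᵥ ((W k) *ᵥ (u k - g)) := by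
      have := (hW k).posSemidef.dotProduct_mulVec_nonneg (u k - g)
      simpa using this
    have hqk : (u k - fm k) ⬝ᵥ ((W k) *ᵥ (u k - fm k)) = 0 := by
      rw [hu_k]; simp
    rw [hsplit, hsplit, hqk, add_zero]
    calc -(1/2) * ((∑ r ∈ univ.erase k, (y r - g) ⬝ᵥ ((W r) *ᵥ (y r - g)))
          + (u k - g) ⬝ᵥ ((W k) *ᵥ (u k - g))) + P g
        ≤ -(1/2) * (∑ r ∈ univ.erase k, (y r - g) ⬝ᵥ ((W r) *ᵥ (y r - g))) + P g := by
          nlinarith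
      _ ≤ _ := hfm k g
  have hfm_eq : fm k = ∑ r, (H r) *ᵥ (u r) := hrep u (fm k) hmax
  -- derive the key linear identity
  have hsum : ∑ r, (H r) *ᵥ (u r) = ∑ r, (H r) *ᵥ (y r) - (H k) *ᵥ (y k) + (H k) *ᵥ (fm k) := by
    have h1 : ∑ r, (H r) *ᵥ (u r)
        = (∑ r ∈ univ.erase k, (H r) *ᵥ (y r)) + (H k) *ᵥ (fm k) := by
      rw [← Finset.sum_erase_add _ _ (Finset.mem_univ k), hu_k]
      congr 1
      refine Finset.sum_congr rfl fun r hr => ?_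
      rw [hu_ne r (Finset.mem_erase.mp hr).1]
    have h2 : ∑ r ∈ univ.erase k, (H r) *ᵥ (y r)
        = ∑ r, (H r) *ᵥ (y r) - (H k) *ᵥ (y k) := by
      rw [← Finset.sum_erase_add _ _ (Finset.mem_univ k)]
      abel
    rw [h1, h2]
  have hkey : (1 - H k) *ᵥ (fm k - y k) = fhat - y k := by
    have : fm k = fhat - (H k) *ᵥ (y k) + (H k) *ᵥ (fm k) := by
      conv_lhs => rw [hfm_eq]
      rw [hsum, ← hfhat_eq]
    have h3 : (1 - H k) *ᵥ (fm k - y k)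
        = fm k - (H k) *ᵥ (fm k) - y k + (H k) *ᵥ (y k) := by
      rw [sub_mulVec, one_mulVec, mulVec_sub]; abel
    rw [h3]
    nth_rewrite 1 [this]
    abel
  have hinv : fm k - y k = (1 - H k)⁻¹ *ᵥ (fhat - y k) := by
    rw [← hkey, mulVec_mulVec, Matrix.nonsing_inv_mul _ ((Matrix.isUnit_iff_isUnit_det _).mp (hHinv k)), one_mulVec]
  have hneg : y k - fm k = -((1 - H k)⁻¹ *ᵥ (fhat - y k)) := by
    rw [← hinv]; abel
  rw [hneg, mulVec_neg, dotProduct_neg, neg_dotProduct, neg_neg]
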